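/- Let φ be a closed block-labelled modal μ-calculus formula in disjunctive form, N = (S⃗, V) a network of LTSs, i an index, and P = lts((enc(φ), S⃗[i]), V//ᵢ) the global LTS of the quotient formula network. If (ψ₁, s₁) →δ (ψₙ, sₙ) is a transition sequence of P with label sequence δ, then there exists a transition sequence ψ₁ →δ' ψₙ in enc(φ) such that the μ-projection of δ' (the subsequence of δ' consisting of its μᵏ-labels) is identical to the μ-projection of δ; moreover, if the transition sequence in P is a circuit, then δ' can be chosen such that the corresponding transition sequence in enc(φ) is also a circuit. -/

import Mathlib

/-- A labelled transition system: a transition relation and an initial state. -/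
structure LTS (σ : Type) (α : Type) where
  trans : σ → α → σ → Prop
  init : σ

/-- Block-labelled modal μ-calculus formulas in disjunctive form: only `ff`,
disjunction, possibility modalities, minimal fix-points, variables (labelled
with a block number) and negation. -/
inductive DForm (α χ : Type) : Type where
  | ff : DForm α χ
  | or : DForm α χ → DForm α χ → DForm α χ
  | neg : DForm α χ → DForm α χ
  | dia : α → DForm α χ → DForm α χ
  | mu : χ → ℕ → DForm α χ → DForm α χ
  | var : χ → ℕ → DForm α χ

/-- Labels of formula graphs: `∨`, `¬`, `⟨a⟩` and `μᵏ`. -/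
inductive FLabel (α : Type) : Type where
  | or : FLabel α
  | neg : FLabel α
  | dia : α → FLabel α
  | mu : ℕ → FLabel α

/-- The binding sub-formula `φ[X]` of a variable named `X` (the binder `μX^k.ψ₀`),
if any; unique when bound variables are distinct. -/
def findBinder {α χ : Type} [DecidableEq χ] : DForm α χ → χ → Option (DForm α χ)
  | DForm.ff, _ => none
  | DForm.or φ₁ φ₂, X => (findBinder φ₁ X).orElse (fun _ => findBinder φ₂ X)
  | DForm.neg φ₀, X => findBinder φ₀ X
  | DForm.dia _ φ₀, X => findBinder φ₀ X
  | DForm.mu Y k φ₀, X => if Y = X then some (DForm.mu Y k φ₀) else findBinder φ₀ X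
  | DForm.var _ _, _ => none

/-- Free (block-labelled) variables. -/
def dfvD {α χ : Type} : DForm α χ → Set (χ × ℕ)
  | DForm.ff => ∅
  | DForm.or φ₁ φ₂ => dfvD φ₁ ∪ dfvD φ₂
  | DForm.neg φ₀ => dfvD φ₀
  | DForm.dia _ φ₀ => dfvD φ₀
  | DForm.mu X k φ₀ => dfvD φ₀ \ {(X, k)}
  | DForm.var X k => {(X, k)}

/-- Bound (block-labelled) variables. -/
def dbvD {α χ : Type} : DForm α χ → Set (χ × ℕ)
  | DForm.ff => ∅
  | DForm.or φ₁ φ₂ => dbvD φ₁ ∪ dbvD φ₂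
  | DForm.neg φ₀ => dbvD φ₀
  | DForm.dia _ φ₀ => dbvD φ₀
  | DForm.mu X k φ₀ => insert (X, k) (dbvD φ₀)
  | DForm.var _ _ => ∅

/-- The list of all names bound in the formula. -/
def binderNames {α χ : Type} : DForm α χ → List χ
  | DForm.ff => []
  | DForm.or φ₁ φ₂ => binderNames φ₁ ++ binderNames φ₂
  | DForm.neg φ₀ => binderNames φ₀
  | DForm.dia _ φ₀ => binderNames φ₀
  | DForm.mu X _ φ₀ => X :: binderNames φ₀
  | DForm.var _ _ => []

/-- All bound variables have distinct names (and in particular each is bound once). -/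
def DistinctBound {α χ : Type} (φ : DForm α χ) : Prop := (binderNames φ).Nodup

/-- The list of block numbers occurring in the formula. -/
def blockList {α χ : Type} : DForm α χ → List ℕ
  | DForm.ff => []
  | DForm.or φ₁ φ₂ => blockList φ₁ ++ blockList φ₂
  | DForm.neg φ₀ => blockList φ₀
  | DForm.dia _ φ₀ => blockList φ₀
  | DForm.mu _ k φ₀ => k :: blockList φ₀
  | DForm.var _ k => [k]

/-- Disjunction of a list of formulas (`ff` for the empty list, the formula
itself for a singleton). -/
def bigOr {α χ : Type} : List (DForm α χ) → DForm α χ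
  | [] => DForm.ff
  | d :: ds => ds.foldl DForm.or d

/-- `SubNeg φ b ψ`: `ψ` is a sub-formula of `φ`, with `b = true` iff the path from
the root of `φ` to the occurrence of `ψ` traverses an even number of negations. -/
inductive SubNeg {α χ : Type} (φ : DForm α χ) : Bool → DForm α χ → Prop
  | refl : SubNeg φ true φ
  | or_l {b ψ₁ ψ₂} : SubNeg φ b (DForm.or ψ₁ ψ₂) → SubNeg φ b ψ₁
  | or_r {b ψ₁ ψ₂} : SubNeg φ b (DForm.or ψ₁ ψ₂) → SubNeg φ b ψ₂
  | neg {b ψ} : SubNeg φ b (DForm.neg ψ) → SubNeg φ (!b) ψ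
  | dia {b a ψ} : SubNeg φ b (DForm.dia a ψ) → SubNeg φ b ψ
  | mu {b X k ψ} : SubNeg φ b (DForm.mu X k ψ) → SubNeg φ b ψ

/-- Sub-formula relation. -/
def Subf {α χ : Type} (φ ψ : DForm α χ) : Prop := ∃ b, SubNeg φ b ψ

/-- The variable named `X` occurs (bound or free, as binder or as use) with block
number `k` in `φ`. -/
def VarOcc {α χ : Type} (φ : DForm α χ) (X : χ) (k : ℕ) : Prop :=
  Subf φ (DForm.var X k) ∨ ∃ ψ, Subf φ (DForm.mu X k ψ)

/-- Well-formedness of a block-labelling: (1) all occurrences of a variable carry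
the same block number; (2) even block numbers are used exactly for binders
occurring under an even number of negations; (3) block numbers of free variables
of a binding sub-formula do not exceed the block number of the binder. -/
def WFBL {α χ : Type} (φ : DForm α χ) : Prop :=
  (∀ X k k', VarOcc φ X k → VarOcc φ X k' → k = k') ∧
  (∀ (b : Bool) (X : χ) (k : ℕ) (ψ : DForm α χ),
    SubNeg φ b (DForm.mu X k ψ) → (Even k ↔ b = true)) ∧
  (∀ (X : χ) (k : ℕ) (ψ : DForm α χ),
    Subf φ (DForm.mu X k ψ) → ∀ p ∈ dfvD (DForm.mu X k ψ), p.2 ≤ k)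

/-- Transitions of the formula graph `enc(φ)` encoding the formula `φ`. -/
inductive EncTrans {α χ : Type} [DecidableEq χ] (φ : DForm α χ) :
    DForm α χ → FLabel α → DForm α χ → Prop
  | var {X : χ} {k : ℕ} {ψ : DForm α χ} :
      findBinder φ X = some ψ → EncTrans φ (DForm.var X k) FLabel.or ψ
  | neg (ψ : DForm α χ) : EncTrans φ (DForm.neg ψ) FLabel.neg ψ
  | dia (a : α) (ψ : DForm α χ) : EncTrans φ (DForm.dia a ψ) (FLabel.dia a) ψ
  | or_l (ψ₁ ψ₂ : DForm α χ) : EncTrans φ (DForm.or ψ₁ ψ₂) FLabel.or ψ₁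
  | or_r (ψ₁ ψ₂ : DForm α χ) : EncTrans φ (DForm.or ψ₁ ψ₂) FLabel.or ψ₂
  | mu (X : χ) (k : ℕ) (ψ : DForm α χ) :
      EncTrans φ (DForm.mu X k ψ) (FLabel.mu k) ψ

/-- The formula graph encoding `φ`: states are sub-formulas, initial state is `φ`. -/
def encLTS {α χ : Type} [DecidableEq χ] (φ : DForm α χ) : LTS (DForm α χ) (FLabel α) :=
  ⟨EncTrans φ, φ⟩

/-- A synchronisation vector: a label or `•` (i.e. `none`) for each index. -/
abbrev SyncVec (n : ℕ) (α : Type) : Type := Fin n → Option α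

/-- A synchronisation rule: a synchronisation vector together with a result label. -/
abbrev SyncRule (n : ℕ) (α : Type) : Type := SyncVec n α × α

/-- The set of active indices of a synchronisation vector. -/
def Active {n : ℕ} {α : Type} (t : SyncVec n α) : Set (Fin n) := {i | t i ≠ none}

/-- The global LTS of a network of LTSs. -/
def netLTS {n : ℕ} {α : Type} {σ : Fin n → Type} (S : ∀ i, LTS (σ i) α)
    (V : List (SyncRule n α)) : LTS (∀ i, σ i) α where
  init := fun i => (S i).init
  trans := fun s a s' => ∃ r ∈ V, r.2 = a ∧
    ∀ i, (r.1 i = none → s' i = s i) ∧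
      ∀ b, r.1 i = some b → (S i).trans (s i) b (s' i)

/-- Projection of a synchronisation vector removing index `i`. -/
def subVec {n : ℕ} {α : Type} (i : Fin (n + 1)) (t : SyncVec (n + 1) α) : SyncVec n α :=
  fun j => t (i.succAbove j)

/-- `alab` assigns a unique unused label to each synchronisation rule. -/
def FreshLabels {n : ℕ} {α : Type} (V : List (SyncRule n α)) (alab : SyncRule n α → α) : Prop :=
  Function.Injective alab ∧
  ∀ r ∈ V, ∀ r' ∈ V, alab r ≠ r'.2 ∧ ∀ j, r'.1 j ≠ some (alab r)

/-- The synchronisation rules of the sub-network `N∖i`. -/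
def subRules {n : ℕ} {α : Type} [DecidableEq α] (i : Fin (n + 1))
    (V : List (SyncRule (n + 1) α)) (alab : SyncRule (n + 1) α → α) :
    List (SyncRule n α) :=
  V.filterMap fun r =>
    if r.1 i = none then some (subVec i r.1, r.2)
    else if ∃ j, j ≠ i ∧ r.1 j ≠ none then some (subVec i r.1, alab r)
    else none

/-- The global LTS of a network of two LTSs (with possibly heterogeneous label
types), given by synchronisation rules on pairs. -/
def pairLTS {σ₁ σ₂ β₁ β₂ β₃ : Type} (L₁ : LTS σ₁ β₁) (L₂ : LTS σ₂ β₂)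
    (W : List ((Option β₁ × Option β₂) × β₃)) : LTS (σ₁ × σ₂) β₃ where
  init := (L₁.init, L₂.init)
  trans := fun s c s' => ∃ r ∈ W, r.2 = c ∧
    (r.1.1 = none → s'.1 = s.1) ∧ (∀ b, r.1.1 = some b → L₁.trans s.1 b s'.1) ∧
    (r.1.2 = none → s'.2 = s.2) ∧ (∀ b, r.1.2 = some b → L₂.trans s.2 b s'.2)

/-- The rules `V'` defining the interactions between `S⃗[i]` and `N∖i`. -/
def pairRules {n : ℕ} {α : Type} [DecidableEq α] (i : Fin (n + 1))
    (V : List (SyncRule (n + 1) α)) (alab : SyncRule (n + 1) α → α) :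
    List ((Option α × Option α) × α) :=
  V.map fun r =>
    if r.1 i = none then ((none, some r.2), r.2)
    else if ∃ j, j ≠ i ∧ r.1 j ≠ none then ((r.1 i, some (alab r)), r.2)
    else ((r.1 i, none), r.2)

/-- The synchronisation rules `V//ᵢ` of the quotient formula network, composing a
formula graph (labels `FLabel α`, given the block numbers `ks` occurring in the
formula) with the `i`-th individual LTS of a network with rules `V`. -/
def quotRules {n : ℕ} {α : Type} [DecidableEq α] (ks : List ℕ)
    (V : List (SyncRule n α)) (alab : SyncRule n α → α) (i : Fin n) :
    List ((Option (FLabel α) × Option α) × FLabel α) :=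
  (((FLabel.neg : FLabel α) :: FLabel.or :: ks.map FLabel.mu).map fun c =>
      ((some c, none), c)) ++
  V.map fun r =>
    if r.1 i = none then ((some (FLabel.dia r.2), none), FLabel.dia r.2)
    else if ∃ j, j ≠ i ∧ r.1 j ≠ none then
      ((some (FLabel.dia r.2), r.1 i), FLabel.dia (alab r))
    else ((some (FLabel.dia r.2), r.1 i), FLabel.or)

/-- Paths of an LTS, recording the traversed labels. -/
inductive LPath {σ β : Type} (L : LTS σ β) : σ → List β → σ → Prop
  | nil (s : σ) : LPath L s [] s
  | cons {s b s' δ s''} : L.trans s b s' → LPath L s' δ s'' → LPath L s (b :: δ) s''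

/-- Paths using only transitions of the set `T`, recording the traversed labels. -/
inductive TPathIn {σ β : Type} (T : Set (σ × β × σ)) : σ → List β → σ → Prop
  | nil (s : σ) : TPathIn T s [] s
  | cons {s b s' δ s''} : (s, b, s') ∈ T → TPathIn T s' δ s'' → TPathIn T s (b :: δ) s''

/-- Paths of an LTS, recording the traversed transitions. -/
inductive TrPath {σ β : Type} (L : LTS σ β) : σ → List (σ × β × σ) → σ → Prop
  | nil (s : σ) : TrPath L s [] s
  | cons {s b s' l s''} : L.trans s b s' → TrPath L s' l s'' →
      TrPath L s ((s, b, s') :: l) s''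

/-- The states of a set of transitions. -/
def circuitStates {σ β : Type} (T : Set (σ × β × σ)) : Set σ :=
  {s | ∃ tr ∈ T, tr.1 = s ∨ tr.2.2 = s}

/-- `T` is a circuit: a set of transitions of `L` such that any two of its states
are connected by a sequence of transitions of `T`. -/
def IsCircuit {σ β : Type} (L : LTS σ β) (T : Set (σ × β × σ)) : Prop :=
  (∀ tr ∈ T, L.trans tr.1 tr.2.1 tr.2.2) ∧
  ∀ s ∈ circuitStates T, ∀ s' ∈ circuitStates T, ∃ δ, TPathIn T s δ s'

/-- `s` is a root of the circuit `T`: a state of `T` reachable from the initial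
state without traversing any transition of `T`. -/
def IsRoot {σ β : Type} (L : LTS σ β) (T : Set (σ × β × σ)) (s : σ) : Prop :=
  s ∈ circuitStates T ∧
  Relation.ReflTransGen (fun x y => ∃ b, L.trans x b y ∧ (x, b, y) ∉ T) L.init s

/-- Is the label a negation? -/
def isNegL {α : Type} : FLabel α → Bool
  | FLabel.neg => true
  | _ => false

/-- Is the label a `μᵏ` label? -/
def isMuL {α : Type} : FLabel α → Bool
  | FLabel.mu _ => true
  | _ => false

/-- Number of negation labels in a label sequence. -/
def negCountL {α : Type} (δ : List (FLabel α)) : ℕ := δ.countP isNegL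

/-- The μ-projection of a label sequence: the subsequence of its `μᵏ` labels. -/
def muProj {α : Type} (δ : List (FLabel α)) : List (FLabel α) := δ.filter isMuL

/-- Condition (1) of formula graphs: every label is `∨`, `¬`, `⟨a⟩` or `μᵏ`. -/
def FGcond1 {σ α : Type} (L : LTS σ (FLabel α)) : Prop :=
  ∀ s c s', L.trans s c s' →
    c = FLabel.or ∨ c = FLabel.neg ∨ (∃ a, c = FLabel.dia a) ∨ ∃ k, c = FLabel.mu k

/-- Condition (2) of formula graphs: on every path from the initial state ending
with a `μᵏ`-transition, `k` is even iff the path contains an even number of `¬`. -/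
def FGcond2 {σ α : Type} (L : LTS σ (FLabel α)) : Prop :=
  ∀ (δ : List (FLabel α)) (s : σ) (k : ℕ) (s' : σ),
    LPath L L.init δ s → L.trans s (FLabel.mu k) s' →
    (Even k ↔ Even (negCountL δ))

/-- Condition (3) of formula graphs: every rooted circuit contains a `μᵏ`-transition,
and the first `μ`-transition traversed from a root has a minimal block number. -/
def FGcond3 {σ α : Type} (L : LTS σ (FLabel α)) : Prop :=
  ∀ T : Set (σ × FLabel α × σ), IsCircuit L T → ∀ s, IsRoot L T s →
    (∃ tr ∈ T, ∃ k, tr.2.1 = FLabel.mu k) ∧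
    ∀ (δ : List (FLabel α)) (k' : ℕ) (s' : σ),
      TPathIn T s (δ ++ [FLabel.mu k']) s' → (∀ c ∈ δ, isMuL c = false) →
      ∀ x k y, (x, FLabel.mu k, y) ∈ T → k' ≤ k

/-- Every transition sequence `(ψ₁, s₁) →δ (ψₙ, sₙ)` of the LTS of the quotient
formula network can be matched by a transition sequence `ψ₁ →δ' ψₙ` of `enc(φ)`
with the same μ-projection; moreover if the former is a circuit then `δ'` can be
chosen so that the latter is also a circuit. -/

lemma muProj_cons {α : Type} (c : FLabel α) (δ : List (FLabel α)) :
    muProj (c :: δ) = if isMuL c then c :: muProj δ else muProj δ := by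
  simp [muProj, List.filter_cons]

lemma trPath_mem {σ β : Type} {L : LTS σ β} {s : σ} {l : List (σ × β × σ)} {s' : σ}
    (h : TrPath L s l s') : ∀ tr ∈ l, L.trans tr.1 tr.2.1 tr.2.2 := by
  induction h with
  | nil => simp
  | cons ht _ ih =>
    intro tr htr
    rcases List.mem_cons.1 htr with rfl | htr
    · exact ht
    · exact ih tr htr

lemma quot_step {α χ : Type} [DecidableEq α] [DecidableEq χ] {n : ℕ}
    {σ : Fin n → Type} {S : ∀ j, LTS (σ j) α}
    {V : List (SyncRule n α)} {alab : SyncRule n α → α} {i : Fin n}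
    {φ : DForm α χ} {p p' : DForm α χ × σ i} {c : FLabel α}
    (h : (pairLTS (encLTS φ) (S i) (quotRules (blockList φ) V alab i)).trans p c p') :
    ∃ c', EncTrans φ p.1 c' p'.1 ∧ isMuL c' = isMuL c ∧ (isMuL c = true → c' = c) := by
  obtain ⟨r, hr, hc, _, h2, _, _⟩ := h
  rw [quotRules, List.mem_append] at hr
  rcases hr with hr | hr
  · obtain ⟨c₀, _, rfl⟩ := List.mem_map.1 hr
    subst hc
    exact ⟨c₀, h2 c₀ rfl, rfl, fun _ => rfl⟩
  · obtain ⟨v, _, rfl⟩ := List.mem_map.1 hr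
    subst hc
    split_ifs at h2 ⊢ with h₁ h₂
    · exact ⟨FLabel.dia v.2, h2 _ rfl, rfl, by simp [isMuL]⟩
    · exact ⟨FLabel.dia v.2, h2 _ rfl, by simp [isMuL], by simp [isMuL]⟩
    · exact ⟨FLabel.dia v.2, h2 _ rfl, by simp [isMuL], by simp [isMuL]⟩

theorem quotient_path_lifting {α χ : Type} [DecidableEq α] [DecidableEq χ] {n : ℕ}
    {σ : Fin n → Type} (S : ∀ j, LTS (σ j) α)
    (V : List (SyncRule n α)) (alab : SyncRule n α → α)
    (hfresh : FreshLabels V alab) (i : Fin n)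
    (φ : DForm α χ) (hclosed : dfvD φ = ∅)
    (p₁ p₂ : DForm α χ × σ i)
    (l : List ((DForm α χ × σ i) × FLabel α × (DForm α χ × σ i)))
    (hpath : TrPath (pairLTS (encLTS φ) (S i) (quotRules (blockList φ) V alab i))
              p₁ l p₂) :
    ∃ l' : List (DForm α χ × FLabel α × DForm α χ),
      TrPath (encLTS φ) p₁.1 l' p₂.1 ∧
      muProj (l'.map fun tr => tr.2.1) = muProj (l.map fun tr => tr.2.1) ∧
      (IsCircuit (pairLTS (encLTS φ) (S i) (quotRules (blockList φ) V alab i))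
          {tr | tr ∈ l} →
        IsCircuit (encLTS φ) {tr | tr ∈ l'}) := by
  -- Step 1: build the lifted path with endpoint correspondence.
  have main : ∃ l' : List (DForm α χ × FLabel α × DForm α χ),
      TrPath (encLTS φ) p₁.1 l' p₂.1 ∧
      muProj (l'.map fun tr => tr.2.1) = muProj (l.map fun tr => tr.2.1) ∧
      (∀ tr ∈ l, ∃ c', (tr.1.1, c', tr.2.2.1) ∈ l') ∧
      (∀ tr' ∈ l', ∃ tr ∈ l, tr'.1 = tr.1.1 ∧ tr'.2.2 = tr.2.2.1) := by
    induction hpath with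
    | nil s => exact ⟨[], TrPath.nil _, rfl, by simp, by simp⟩
    | @cons s b s' ltl s'' ht _ ih =>
      obtain ⟨l', hp', hmu', hfwd, hbwd⟩ := ih
      obtain ⟨c', hct, hmeq, hmu⟩ := quot_step ht
      refine ⟨(s.1, c', s'.1) :: l', TrPath.cons hct hp', ?_, ?_, ?_⟩
      · simp only [List.map_cons, muProj_cons, hmeq]
        by_cases hb : isMuL b
        · rw [if_pos hb, if_pos hb, hmu hb, hmu']
        · rw [if_neg hb, if_neg hb, hmu']
      · intro tr htr
        rcases List.mem_cons.1 htr with rfl | htr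
        · exact ⟨c', List.mem_cons_self⟩
        · obtain ⟨c'', hc''⟩ := hfwd tr htr
          exact ⟨c'', List.mem_cons_of_mem _ hc''⟩
      · intro tr' htr'
        rcases List.mem_cons.1 htr' with rfl | htr'
        · exact ⟨(s, b, s'), List.mem_cons_self, rfl, rfl⟩
        · obtain ⟨tr, htr, h1, h2⟩ := hbwd tr' htr'
          exact ⟨tr, List.mem_cons_of_mem _ htr, h1, h2⟩
  obtain ⟨l', hp', hmu', hfwd, hbwd⟩ := main
  refine ⟨l', hp', hmu', ?_⟩
  intro hcirc
  constructor
  · intro tr htr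
    exact trPath_mem hp' tr htr
  · -- connectivity
    have proj : ∀ (p q : DForm α χ × σ i) (δ : List (FLabel α)),
        TPathIn {tr | tr ∈ l} p δ q →
        ∃ δ', TPathIn {tr | tr ∈ l'} p.1 δ' q.1 := by
      intro p q δ hδ
      induction hδ with
      | nil s => exact ⟨[], TPathIn.nil _⟩
      | @cons s b s' δ s'' hmem _ ih =>
        obtain ⟨δ', hδ'⟩ := ih
        obtain ⟨c', hc'⟩ := hfwd _ hmem
        exact ⟨c' :: δ', TPathIn.cons hc' hδ'⟩
    intro u hu v hv
    obtain ⟨tru, htru, hut⟩ := hu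
    obtain ⟨trv, htrv, hvt⟩ := hv
    obtain ⟨pu, hpu, hpu1, hpu2⟩ := hbwd tru htru
    obtain ⟨pv, hpv, hpv1, hpv2⟩ := hbwd trv htrv
    -- pick the pair state projecting to u (resp. v)
    have hu' : ∃ P : DForm α χ × σ i, P.1 = u ∧ P ∈ circuitStates {tr | tr ∈ l} := by
      rcases hut with rfl | rfl
      · exact ⟨pu.1, hpu1.symm, pu, hpu, Or.inl rfl⟩
      · exact ⟨pu.2.2, hpu2.symm, pu, hpu, Or.inr rfl⟩
    have hv' : ∃ P : DForm α χ × σ i, P.1 = v ∧ P ∈ circuitStates {tr | tr ∈ l} := by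
      rcases hvt with rfl | rfl
      · exact ⟨pv.1, hpv1.symm, pv, hpv, Or.inl rfl⟩
      · exact ⟨pv.2.2, hpv2.symm, pv, hpv, Or.inr rfl⟩
    obtain ⟨P, rfl, hP⟩ := hu'
    obtain ⟨Q, rfl, hQ⟩ := hv'
    obtain ⟨δ, hδ⟩ := hcirc.2 P hP Q hQ
    exact proj P Q δ hδ
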